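/- Let k be a field, n ≥ 1 an integer, and f = (f_1,…,f_n) ∈ Aut_k(A^n) an automorphism fixing the origin, i.e. f(0,…,0) = (0,…,0). Write each f_i = f_{i,1} + f_{i,2} + ⋯ + f_{i,d}, where f_{i,j} ∈ k[x_1,…,x_n] is homogeneous of degree j. Then the n-tuple g = (g_1,…,g_n) with g_i = f_{i,1} + t·f_{i,2} + t²·f_{i,3} + ⋯ + t^{d−1}·f_{i,d} belongs to Aut_{k[t]}(A^n), equals the conjugate α^{−1}∘f∘α over k[t,1/t] where α = (t·x_1,…,t·x_n), and its specialization g(0) at t = 0 equals the linear part (f_{1,1},…,f_{n,1}) of f, which is an element of GL_n(k). -/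

import Mathlib

open MvPolynomial

/-- Endomorphisms of affine `n`-space over `R`: `n`-tuples of polynomials in
`R[x_1,…,x_n]`, with composition given by substitution. -/
def PolyEnd (R : Type*) [CommRing R] (n : ℕ) : Type _ := Fin n → MvPolynomial (Fin n) R

namespace PolyEnd

variable {R S : Type*} [CommRing R] [CommRing S] {n : ℕ}

noncomputable instance : Monoid (PolyEnd R n) where
  one := fun i => X i
  mul f g := fun i => bind₁ g (f i)
  mul_assoc f g h := funext fun i => by
    show bind₁ h (bind₁ g (f i)) = bind₁ (fun j => bind₁ h (g j)) (f i)
    exact bind₁_bind₁ g h (f i)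
  one_mul f := funext fun i => by
    show bind₁ f (X i) = f i
    exact bind₁_X_right f i
  mul_one f := funext fun i => by
    show bind₁ X (f i) = f i
    rw [bind₁_X_left, AlgHom.id_apply]

@[simp] lemma mul_apply (f g : PolyEnd R n) (i : Fin n) :
    (f * g) i = bind₁ g (f i) := rfl

@[simp] lemma one_apply (i : Fin n) : (1 : PolyEnd R n) i = X i := rfl

/-- The Jacobian determinant of an endomorphism. -/
noncomputable def jac (f : PolyEnd R n) : MvPolynomial (Fin n) R :=
  (Matrix.of fun i j => pderiv j (f i)).det

/-- The chain rule for partial derivatives of a substitution. -/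
lemma pderiv_bind₁ (g : Fin n → MvPolynomial (Fin n) R)
    (p : MvPolynomial (Fin n) R) (j : Fin n) :
    pderiv j (bind₁ g p) = ∑ i, bind₁ g (pderiv i p) * pderiv j (g i) := by
  induction p using MvPolynomial.induction_on with
  | C a => simp
  | add p q hp hq => simp [hp, hq, Finset.sum_add_distrib, add_mul]
  | mul_X p i hp =>
      rw [map_mul, bind₁_X_right, pderiv_mul, hp]
      have key : ∀ l : Fin n, bind₁ g (pderiv l (p * X i)) * pderiv j (g l)
          = bind₁ g (pderiv l p) * pderiv j (g l) * g i
            + (if l = i then bind₁ g p * pderiv j (g i) else 0) := by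
        intro l
        rw [pderiv_mul, pderiv_X]
        by_cases h : l = i
        · subst h
          simp only [Pi.single_apply, if_pos rfl, map_add, map_mul, bind₁_X_right,
            bind₁_C_right, if_pos rfl]
          ring_nf
          simp [mul_comm, mul_left_comm, mul_assoc]
        · simp only [Pi.single_apply, if_neg (Ne.symm h), if_neg h, mul_zero, map_mul,
            map_add, map_zero, add_zero, bind₁_X_right]
          ring
      rw [Finset.sum_congr rfl fun l _ => key l, Finset.sum_add_distrib]
      simp [Finset.sum_mul]

lemma jac_one : jac (1 : PolyEnd R n) = 1 := by
  unfold jac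
  have : (Matrix.of fun i j => pderiv j ((1 : PolyEnd R n) i))
      = (1 : Matrix (Fin n) (Fin n) (MvPolynomial (Fin n) R)) := by
    ext i j
    simp [Matrix.one_apply, pderiv_X, Pi.single_apply, eq_comm]
  rw [this, Matrix.det_one]

/-- The chain rule for Jacobians. -/
lemma jac_mul (f g : PolyEnd R n) : jac (f * g) = bind₁ g (jac f) * jac g := by
  unfold jac
  have : (Matrix.of fun i j => pderiv j ((f * g) i))
      = (Matrix.of fun i l => pderiv l (f i)).map (bind₁ g)
        * (Matrix.of fun l j => pderiv j (g l)) := by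
    ext i j
    simp [Matrix.mul_apply]
    exact congrArg (coeff _) (pderiv_bind₁ g (f i) j)
  rw [this, Matrix.det_mul]
  congr 1
  exact ((bind₁ g).map_det (Matrix.of fun i l => pderiv l (f i))).symm

end PolyEnd

/-- Automorphisms of affine `n`-space over `R` : endomorphisms admitting a two-sided
compositional inverse. -/
abbrev PolyAut (R : Type*) [CommRing R] (n : ℕ) := (PolyEnd R n)ˣ

namespace PolyAut

variable {R S : Type*} [CommRing R] [CommRing S] {n : ℕ}

lemma bind₁_val_injective (f : PolyAut R n) :
    Function.Injective (bind₁ (σ := Fin n) (f.val : Fin n → MvPolynomial (Fin n) R)) := by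
  intro p q h
  have hinv : ∀ r : MvPolynomial (Fin n) R, bind₁ (f.inv : Fin n → _) (bind₁ (f.val : Fin n → _) r) = r := by
    intro r
    refine (bind₁_bind₁ _ _ r).trans ?_
    have : (fun i => bind₁ (f.inv : Fin n → _) ((f.val : Fin n → _) i)) = (f.val * f.inv : PolyEnd R n) := rfl
    rw [this, f.val_inv]
    show bind₁ (fun i => X i) r = r
    rw [show (fun i : Fin n => (X i : MvPolynomial (Fin n) R)) = X from rfl,
      bind₁_X_left, AlgHom.id_apply]
  calc p = bind₁ (f.inv : Fin n → _) (bind₁ (f.val : Fin n → _) p) := (hinv p).symm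
    _ = bind₁ (f.inv : Fin n → _) (bind₁ (f.val : Fin n → _) q) := by rw [h]
    _ = q := hinv q

end PolyAut

/-- The subgroup of automorphisms of Jacobian `1`. -/
noncomputable def SAutGrp (R : Type*) [CommRing R] (n : ℕ) : Subgroup (PolyAut R n) where
  carrier := {f | PolyEnd.jac f.val = 1}
  one_mem' := PolyEnd.jac_one
  mul_mem' := by
    intro f g hf hg
    show PolyEnd.jac (f.val * g.val) = 1
    rw [PolyEnd.jac_mul, hf, hg, map_one, one_mul]
  inv_mem' := by
    intro f hf
    show PolyEnd.jac f.inv = 1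
    apply PolyAut.bind₁_val_injective f
    have h1 : PolyEnd.jac (f.inv * f.val) = 1 := by
      rw [f.inv_val]; exact PolyEnd.jac_one
    rw [PolyEnd.jac_mul, hf, mul_one] at h1
    rw [map_one]
    exact h1

lemma mem_SAutGrp_iff {R : Type*} [CommRing R] {n : ℕ} (f : PolyAut R n) :
    f ∈ SAutGrp R n ↔ PolyEnd.jac f.val = 1 := Iff.rfl

section Translations

variable {R : Type*} [CommRing R] {n : ℕ}

/-- The translation endomorphism `(x_1 + c_1, …, x_n + c_n)`. -/
noncomputable def translEnd (c : Fin n → R) : PolyEnd R n := fun i => X i + C (c i)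

lemma translEnd_mul (c d : Fin n → R) :
    translEnd c * translEnd d = translEnd (c + d) := by
  funext i
  show bind₁ (translEnd d) (translEnd c i) = translEnd (c + d) i
  simp only [translEnd, map_add, bind₁_C_right]
  rw [show bind₁ (translEnd d) (X i) = translEnd d i from bind₁_X_right _ i]
  rw [show bind₁ (translEnd d) (C (c i)) = C (c i) from bind₁_C_right _ _]
  show X i + C (d i) + C (c i) = X i + C (c i + d i)
  rw [map_add]; ring

lemma translEnd_zero : translEnd (0 : Fin n → R) = 1 := by
  funext i
  show X i + C 0 = X i
  simp

/-- The translation automorphism `(x_1 + c_1, …, x_n + c_n)`. -/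
noncomputable def transl (c : Fin n → R) : PolyAut R n where
  val := translEnd c
  inv := translEnd (-c)
  val_inv := by rw [translEnd_mul, add_neg_cancel, translEnd_zero]
  inv_val := by rw [translEnd_mul, neg_add_cancel, translEnd_zero]

@[simp] lemma transl_val (c : Fin n → R) : (transl c).val = translEnd c := rfl

lemma jac_translEnd (c : Fin n → R) : PolyEnd.jac (translEnd c) = 1 := by
  unfold PolyEnd.jac
  have : (Matrix.of fun i j => pderiv j (translEnd c i))
      = (1 : Matrix (Fin n) (Fin n) (MvPolynomial (Fin n) R)) := by
    ext i j
    simp [translEnd, Matrix.one_apply, pderiv_X, Pi.single_apply, eq_comm]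
  rw [this, Matrix.det_one]

lemma transl_mem_SAutGrp (c : Fin n → R) : transl c ∈ SAutGrp R n := jac_translEnd c

/-- The translation as element of `SAut`. -/
noncomputable def translS (c : Fin n → R) : ↥(SAutGrp R n) := ⟨transl c, transl_mem_SAutGrp c⟩

/-- `f` is a translation. -/
def IsTranslation (f : PolyAut R n) : Prop := ∃ c : Fin n → R, f = transl c

end Translations

section Linear

variable {R : Type*} [CommRing R] {n : ℕ}

/-- The linear endomorphism associated with a matrix. -/
noncomputable def linEnd (M : Matrix (Fin n) (Fin n) R) : PolyEnd R n :=
  fun i => ∑ j, C (M i j) * X j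

/-- `f` is a linear automorphism (i.e. in the image of `GL_n`). -/
def IsLinear (f : PolyAut R n) : Prop := ∃ M : Matrix (Fin n) (Fin n) R, f.val = linEnd M

/-- `f` is a linear automorphism given by a matrix of determinant 1
(i.e. in the image of `SL_n`). -/
def MemSL (f : PolyAut R n) : Prop :=
  ∃ M : Matrix (Fin n) (Fin n) R, M.det = 1 ∧ f.val = linEnd M

/-- `f` is a triangular automorphism. -/
def IsTriangular (f : PolyAut R n) : Prop :=
  ∃ (a : Fin n → Rˣ) (b : Fin n → MvPolynomial (Fin n) R),
    (∀ i : Fin n, b i ∈ MvPolynomial.supported R {j : Fin n | (j : ℕ) < (i : ℕ)}) ∧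
    ∀ i : Fin n, f.val i = C ((a i : R)) * X i + b i

/-- The tame subgroup, generated by linear and triangular automorphisms. -/
noncomputable def TameGrp (R : Type*) [CommRing R] (n : ℕ) : Subgroup (PolyAut R n) :=
  Subgroup.closure {f | IsLinear f ∨ IsTriangular f}

end Linear

section Map

variable {R S : Type*} [CommRing R] [CommRing S] {n : ℕ}

/-- Applying a ring homomorphism to all coefficients, as a monoid homomorphism of
endomorphisms of affine `n`-space. -/
noncomputable def endMapHom (φ : R →+* S) : PolyEnd R n →* PolyEnd S n where
  toFun f := fun i => MvPolynomial.map φ (f i)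
  map_one' := funext fun i => by
    show MvPolynomial.map φ (X i) = X i
    simp
  map_mul' f g := funext fun i => by
    show MvPolynomial.map φ (bind₁ g (f i)) = bind₁ (fun j => MvPolynomial.map φ (g j)) (MvPolynomial.map φ (f i))
    exact map_bind₁ ..

/-- Applying a ring homomorphism to all coefficients, on automorphisms. -/
noncomputable def autMap (φ : R →+* S) : PolyAut R n →* PolyAut S n :=
  Units.map (endMapHom φ)

lemma jac_endMapHom (φ : R →+* S) (f : PolyEnd R n) :
    PolyEnd.jac (endMapHom φ f) = MvPolynomial.map φ (PolyEnd.jac f) := by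
  unfold PolyEnd.jac
  have : (Matrix.of fun i j => pderiv j ((endMapHom φ f) i))
      = (Matrix.of fun i j => pderiv j (f i)).map (MvPolynomial.map φ) :=
    Matrix.ext fun i j => by
      simp only [Matrix.of_apply, Matrix.map_apply]
      exact pderiv_map
  rw [this, RingHom.map_det]
  rfl

/-- Specialisation of an automorphism over `R[t]` at a value `t₀ ∈ R`. -/
noncomputable def specAut (t0 : R) : PolyAut (Polynomial R) n →* PolyAut R n :=
  autMap (Polynomial.evalRingHom t0)

lemma specAut_mem_SAutGrp (h : PolyAut (Polynomial R) n)
    (hh : h ∈ SAutGrp (Polynomial R) n) (t0 : R) :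
    specAut t0 h ∈ SAutGrp R n := by
  show PolyEnd.jac ((specAut t0 h).val) = 1
  have : (specAut t0 h).val = endMapHom (Polynomial.evalRingHom t0) h.val := rfl
  rw [this, jac_endMapHom, hh, map_one]

/-- Specialisation, from `SAut` over `R[t]` to `SAut` over `R`. -/
noncomputable def specSAut (t0 : R) (h : PolyAut (Polynomial R) n)
    (hh : h ∈ SAutGrp (Polynomial R) n) : ↥(SAutGrp R n) :=
  ⟨specAut t0 h, specAut_mem_SAutGrp h hh t0⟩

/-- A subgroup `N` of `SAut_k(𝔸ⁿ)` is closed under specialisation if for every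
automorphism `h` over `k[t]` of Jacobian `1` all of whose specialisations at
`t₀ ≠ 0` lie in `N`, the specialisation at `0` also lies in `N`. Every subgroup
that is closed in the ind-topology has this property. -/
def ClosedUnderSpec {R : Type*} [CommRing R] {n : ℕ} (N : Subgroup ↥(SAutGrp R n)) : Prop :=
  ∀ (h : PolyAut (Polynomial R) n) (hh : h ∈ SAutGrp (Polynomial R) n),
    (∀ t0 : R, t0 ≠ 0 → specSAut t0 h hh ∈ N) → specSAut 0 h hh ∈ N

/-- A subgroup `N` of `Aut_k(𝔸ⁿ)` is closed under specialisation if for every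
automorphism `h` over `k[t]` all of whose specialisations at `t₀ ≠ 0` lie in `N`,
the specialisation at `0` also lies in `N`. -/
def ClosedUnderSpecAut {R : Type*} [CommRing R] {n : ℕ} (N : Subgroup (PolyAut R n)) : Prop :=
  ∀ h : PolyAut (Polynomial R) n,
    (∀ t0 : R, t0 ≠ 0 → specAut t0 h ∈ N) → specAut 0 h ∈ N

end Map

section ScaleT

variable (R : Type*) [CommRing R] (n : ℕ)

/-- The endomorphism `(T^m·x₁, …, T^m·xₙ)` over the Laurent polynomial ring. -/
noncomputable def scaleTEnd (m : ℤ) : PolyEnd (LaurentPolynomial R) n :=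
  fun i => MvPolynomial.C (LaurentPolynomial.T m) * X i

lemma scaleTEnd_mul (m m' : ℤ) :
    scaleTEnd R n m * scaleTEnd R n m' = scaleTEnd R n (m + m') := by
  funext i
  show bind₁ (scaleTEnd R n m') (scaleTEnd R n m i) = scaleTEnd R n (m + m') i
  unfold scaleTEnd
  rw [map_mul, bind₁_C_right, bind₁_X_right]
  rw [LaurentPolynomial.T_add, map_mul]
  ring

lemma scaleTEnd_zero : scaleTEnd R n 0 = 1 := by
  funext i
  show MvPolynomial.C (LaurentPolynomial.T 0) * X i = (1 : PolyEnd (LaurentPolynomial R) n) i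
  rw [LaurentPolynomial.T_zero, map_one, one_mul]
  rfl

/-- The automorphism `α = (t·x₁, …, t·xₙ)` over the Laurent polynomial ring `k[t,1/t]`. -/
noncomputable def scaleT : PolyAut (LaurentPolynomial R) n where
  val := scaleTEnd R n 1
  inv := scaleTEnd R n (-1)
  val_inv := by rw [scaleTEnd_mul]; norm_num [scaleTEnd_zero]
  inv_val := by rw [scaleTEnd_mul]; norm_num [scaleTEnd_zero]

end ScaleT

section AlexanderAux

variable {S : Type*} [CommRing S] {n : ℕ}

lemma bind₁_scale_homog (c : S) {m : ℕ} (p : MvPolynomial (Fin n) S)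
    (hp : p.IsHomogeneous m) :
    bind₁ (fun l : Fin n => (C c : MvPolynomial (Fin n) S) * X l) p = C (c ^ m) * p := by
  conv_lhs => rw [p.as_sum]
  conv_rhs => rw [p.as_sum]
  rw [map_sum, Finset.mul_sum]
  refine Finset.sum_congr rfl fun dm hdm => ?_
  have hdeg : dm.degree = m := by
    by_contra h
    exact (MvPolynomial.mem_support_iff.mp hdm) (hp.coeff_eq_zero h)
  rw [bind₁_monomial, monomial_eq]
  have hprod : ∏ i ∈ dm.support, ((C c : MvPolynomial (Fin n) S) * X i) ^ dm i
      = C (c ^ m) * ∏ i ∈ dm.support, (X i : MvPolynomial (Fin n) S) ^ dm i := by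
    simp_rw [mul_pow, ← C_pow]
    rw [Finset.prod_mul_distrib, ← map_prod, Finset.prod_pow_eq_pow_sum]
    rw [show (∑ i ∈ dm.support, dm i) = m from hdeg]
  rw [hprod, Finsupp.prod]
  ring

lemma degree_one_exists (m : Fin n →₀ ℕ) (hm : m.degree = 1) :
    ∃ j, m = Finsupp.single j 1 := by
  classical
  have hs : m.support.Nonempty := by
    rcases Finset.eq_empty_or_nonempty m.support with h | h
    · exfalso
      have : m = 0 := Finsupp.support_eq_empty.mp h
      rw [this, map_zero] at hm
      exact one_ne_zero hm.symm
    · exact h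
  obtain ⟨j, hj⟩ := hs
  have hsum : ∑ i ∈ m.support, m i = 1 := hm
  have hj1 : 1 ≤ m j := Nat.one_le_iff_ne_zero.mpr (Finsupp.mem_support_iff.mp hj)
  have hle : m j ≤ 1 := hsum ▸ Finset.single_le_sum (fun i _ => Nat.zero_le (m i)) hj
  have hmj : m j = 1 := le_antisymm hle hj1
  refine ⟨j, Finsupp.ext fun i => ?_⟩
  rcases eq_or_ne i j with rfl | hij
  · simp [hmj]
  · rw [Finsupp.single_apply, if_neg (Ne.symm hij)]
    by_contra h
    have hi : i ∈ m.support := Finsupp.mem_support_iff.mpr h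
    have h2 : 2 ≤ ∑ l ∈ m.support, m l := by
      have hsub : ({i, j} : Finset (Fin n)) ⊆ m.support := by
        intro x hx
        simp only [Finset.mem_insert, Finset.mem_singleton] at hx
        rcases hx with rfl | rfl <;> assumption
      calc 2 = 1 + 1 := rfl
        _ ≤ m i + m j := Nat.add_le_add (Nat.one_le_iff_ne_zero.mpr h) hj1
        _ = ∑ l ∈ ({i, j} : Finset (Fin n)), m l := by
            rw [Finset.sum_insert (by simpa using hij), Finset.sum_singleton]
        _ ≤ ∑ l ∈ m.support, m l := Finset.sum_le_sum_of_subset hsub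
    omega

lemma homog_one_eq (p : MvPolynomial (Fin n) S) (hp : p.IsHomogeneous 1) :
    p = ∑ j, C (coeff (Finsupp.single j 1) p) * X j := by
  classical
  ext m
  rw [coeff_sum]
  by_cases hm : m.degree = 1
  · obtain ⟨j0, rfl⟩ := degree_one_exists m hm
    rw [Finset.sum_eq_single j0]
    · rw [coeff_C_mul, coeff_X', if_pos rfl, mul_one]
    · intro j _ hjj
      rw [coeff_C_mul, coeff_X', if_neg, mul_zero]
      intro h
      exact hjj (Finsupp.single_left_injective one_ne_zero h)
    · intro h; exact absurd (Finset.mem_univ j0) h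
  · rw [hp.coeff_eq_zero hm]
    refine (Finset.sum_eq_zero fun j _ => ?_).symm
    rw [coeff_C_mul, coeff_X', if_neg, mul_zero]
    intro h
    apply hm
    rw [← h, Finsupp.degree_single]

end AlexanderAux

lemma alexander_key {k : Type*} [Field k] {n : ℕ} (q : MvPolynomial (Fin n) k) (e : ℕ)
    (hq : q = ∑ j ∈ Finset.Icc 1 e, homogeneousComponent j q) :
    MvPolynomial.map (Polynomial.toLaurent (R := k))
        (∑ j ∈ Finset.Icc 1 e, C (Polynomial.X ^ (j - 1)) *
          MvPolynomial.map Polynomial.C (homogeneousComponent j q))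
      = C (LaurentPolynomial.T (-1)) *
        bind₁ (scaleTEnd k n 1) (MvPolynomial.map (algebraMap k (LaurentPolynomial k)) q) := by
  conv_rhs => rw [hq]
  rw [map_sum (MvPolynomial.map (algebraMap k (LaurentPolynomial k))),
    map_sum (bind₁ (scaleTEnd k n 1)), map_sum (MvPolynomial.map _), Finset.mul_sum]
  refine Finset.sum_congr rfl fun j hj => ?_
  have hcomp : (Polynomial.toLaurent (R := k)).comp Polynomial.C
      = algebraMap k (LaurentPolynomial k) := by
    ext r
    simp [Polynomial.toLaurent_C, LaurentPolynomial.algebraMap_apply]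
  have hhom : (MvPolynomial.map (algebraMap k (LaurentPolynomial k))
      (homogeneousComponent j q)).IsHomogeneous j :=
    (homogeneousComponent_isHomogeneous j q).map _
  rw [map_mul, MvPolynomial.map_C, MvPolynomial.map_map, hcomp, Polynomial.toLaurent_X_pow]
  rw [show bind₁ (scaleTEnd k n 1) (MvPolynomial.map (algebraMap k (LaurentPolynomial k))
        (homogeneousComponent j q))
      = C (LaurentPolynomial.T 1 ^ j) *
        MvPolynomial.map (algebraMap k (LaurentPolynomial k)) (homogeneousComponent j q)
    from bind₁_scale_homog _ _ hhom]
  rw [← mul_assoc, ← map_mul, LaurentPolynomial.T_pow, mul_one, ← LaurentPolynomial.T_add]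
  have h1 : 1 ≤ j := (Finset.mem_Icc.mp hj).1
  have hcast : ((j - 1 : ℕ) : ℤ) = -1 + (j : ℤ) := by omega
  rw [hcast]

/-- **Lemma (the Alexander trick).**  If `f ∈ Aut_k(𝔸ⁿ)` fixes the origin, with homogeneous
decomposition `f_i = f_{i,1} + ⋯ + f_{i,d}`, then `g = (g_i)` with
`g_i = f_{i,1} + t f_{i,2} + ⋯ + t^{d-1} f_{i,d}` is an automorphism over `k[t]`; it equals the
conjugate `α⁻¹ ∘ f ∘ α` over `k[t,1/t]` where `α = (t x₁, …, t xₙ)`, and its specialization at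
`t = 0` is the linear part of `f`, an element of `GL_n(k)`. -/
theorem alexander_trick {k : Type*} [Field k] {n : ℕ} (hn : 1 ≤ n) (f : PolyAut k n)
    (hfix : ∀ i : Fin n, constantCoeff (f.val i) = 0) (d : ℕ)
    (hd : ∀ i : Fin n, f.val i = ∑ j ∈ Finset.Icc 1 d, homogeneousComponent j (f.val i)) :
    ∃ G : PolyAut (Polynomial k) n,
      (∀ i : Fin n, G.val i = ∑ j ∈ Finset.Icc 1 d,
          C (Polynomial.X ^ (j - 1)) *
            MvPolynomial.map (Polynomial.C) (homogeneousComponent j (f.val i))) ∧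
      autMap (Polynomial.toLaurent) G
        = (scaleT k n)⁻¹ * autMap (algebraMap k (LaurentPolynomial k)) f * scaleT k n ∧
      (specAut (0 : k) G).val = (fun i => homogeneousComponent 1 (f.val i)) ∧
      IsLinear (specAut (0 : k) G) := by
  classical
  have hfixinv : ∀ i : Fin n, constantCoeff (f.inv i) = 0 := by
    intro i
    have h0 : bind₁ f.val (f.inv i) = X i := congrFun f.inv_val i
    have h1 := congrArg (aeval (fun _ : Fin n => (0 : k))) h0
    erw [aeval_bind₁, aeval_X] at h1
    simpa [aeval_zero', hfix] using h1
  have hinvdec : ∀ i : Fin n,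
      f.inv i = ∑ j ∈ Finset.Icc 1 ((f.inv i).totalDegree),
        homogeneousComponent j (f.inv i) := by
    intro i
    have h := sum_homogeneousComponent (f.inv i)
    have hIcc : Finset.range ((f.inv i).totalDegree + 1)
        = insert 0 (Finset.Icc 1 ((f.inv i).totalDegree)) := by
      ext x
      simp only [Finset.mem_range, Finset.mem_insert, Finset.mem_Icc]
      omega
    rw [hIcc, Finset.sum_insert (by simp), homogeneousComponent_zero,
      show MvPolynomial.coeff 0 (f.inv i) = constantCoeff (f.inv i) from rfl,
      hfixinv i, map_zero, zero_add] at h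
    exact h.symm
  set L := LaurentPolynomial k with hLdef
  set H : PolyAut L n :=
    (scaleT k n)⁻¹ * autMap (algebraMap k L) f * scaleT k n with hHdef
  set Gv : PolyEnd (Polynomial k) n := fun i => ∑ j ∈ Finset.Icc 1 d,
    C (Polynomial.X ^ (j - 1)) *
      MvPolynomial.map Polynomial.C (homogeneousComponent j (f.val i)) with hGvdef
  set Gi : PolyEnd (Polynomial k) n := fun i => ∑ j ∈ Finset.Icc 1 ((f.inv i).totalDegree),
    C (Polynomial.X ^ (j - 1)) *
      MvPolynomial.map Polynomial.C (homogeneousComponent j (f.inv i)) with hGidef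
  have hHval : ∀ i, H.val i
      = C (LaurentPolynomial.T (-1)) *
        bind₁ (scaleTEnd k n 1) (MvPolynomial.map (algebraMap k L) (f.val i)) := by
    intro i
    show bind₁ (scaleTEnd k n 1)
      (bind₁ (endMapHom (algebraMap k L) f.val) (scaleTEnd k n (-1) i)) = _
    rw [show scaleTEnd k n (-1) i = C (LaurentPolynomial.T (-1)) * X i from rfl,
      map_mul, bind₁_C_right (endMapHom (algebraMap k L) f.val) (LaurentPolynomial.T (-1)),
      bind₁_X_right (endMapHom (algebraMap k L) f.val) i, map_mul,
      bind₁_C_right (scaleTEnd k n 1) (LaurentPolynomial.T (-1))]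
    rfl
  have hHinv : ∀ i, H.inv i
      = C (LaurentPolynomial.T (-1)) *
        bind₁ (scaleTEnd k n 1) (MvPolynomial.map (algebraMap k L) (f.inv i)) := by
    intro i
    show bind₁ (endMapHom (algebraMap k L) f.inv * scaleTEnd k n 1)
      (scaleTEnd k n (-1) i) = _
    rw [show scaleTEnd k n (-1) i = C (LaurentPolynomial.T (-1)) * X i from rfl,
      map_mul, bind₁_C_right (endMapHom (algebraMap k L) f.inv * scaleTEnd k n 1) _,
      bind₁_X_right (endMapHom (algebraMap k L) f.inv * scaleTEnd k n 1) i]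
    rfl
  have hGv : ∀ i, MvPolynomial.map (Polynomial.toLaurent (R := k)) (Gv i) = H.val i :=
    fun i => (alexander_key (f.val i) d (hd i)).trans (hHval i).symm
  have hGi : ∀ i, MvPolynomial.map (Polynomial.toLaurent (R := k)) (Gi i) = H.inv i :=
    fun i => (alexander_key (f.inv i) _ (hinvdec i)).trans (hHinv i).symm
  have hinj : Function.Injective
      (endMapHom (n := n) (Polynomial.toLaurent (R := k))) := by
    intro a b h
    funext i
    exact MvPolynomial.map_injective _ Polynomial.toLaurent_injective (congrFun h i)
  have hEv : endMapHom (Polynomial.toLaurent (R := k)) Gv = H.val := funext hGv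
  have hEi : endMapHom (Polynomial.toLaurent (R := k)) Gi = H.inv := funext hGi
  have hGvGi : Gv * Gi = 1 := by
    apply hinj
    rw [map_mul, hEv, hEi, map_one, H.val_inv]
  have hGiGv : Gi * Gv = 1 := by
    apply hinj
    rw [map_mul, hEv, hEi, map_one, H.inv_val]
  set G : PolyAut (Polynomial k) n := ⟨Gv, Gi, hGvGi, hGiGv⟩ with hGdef
  have hspec : (specAut (0 : k) G).val = fun i => homogeneousComponent 1 (f.val i) := by
    funext i
    show MvPolynomial.map (Polynomial.evalRingHom (0 : k)) (Gv i) = _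
    rw [hGvdef]
    rw [map_sum (MvPolynomial.map (Polynomial.evalRingHom (0 : k)))]
    have hterm : ∀ j ∈ Finset.Icc 1 d,
        MvPolynomial.map (Polynomial.evalRingHom (0 : k))
          (C (Polynomial.X ^ (j - 1)) *
            MvPolynomial.map Polynomial.C (homogeneousComponent j (f.val i)))
        = if j = 1 then homogeneousComponent j (f.val i) else 0 := by
      intro j hj
      have hcomp : (Polynomial.evalRingHom (0 : k)).comp Polynomial.C = RingHom.id k := by
        ext r; simp
      rw [map_mul, MvPolynomial.map_C, MvPolynomial.map_map, hcomp]
      rw [show MvPolynomial.map (RingHom.id k) (homogeneousComponent j (f.val i))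
          = homogeneousComponent j (f.val i) from MvPolynomial.map_id _]
      rcases eq_or_ne j 1 with rfl | hne
      · simp
      · have h1 : 1 ≤ j := (Finset.mem_Icc.mp hj).1
        have hj0 : j - 1 ≠ 0 := by omega
        rw [if_neg hne]
        rw [show (Polynomial.evalRingHom (0 : k)) (Polynomial.X ^ (j - 1)) = 0 by
          simp [zero_pow hj0]]
        rw [map_zero, zero_mul]
    rw [Finset.sum_congr rfl hterm, Finset.sum_ite_eq' (Finset.Icc 1 d) 1]
    by_cases hd1 : 1 ≤ d
    · rw [if_pos (Finset.mem_Icc.mpr ⟨le_refl 1, hd1⟩)]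
    · have hd0 : d = 0 := by omega
      subst hd0
      rw [if_neg (by simp)]
      have hz : f.val i = 0 := by rw [hd i]; simp
      rw [hz, map_zero]
  refine ⟨G, fun i => rfl, ?_, hspec, ?_⟩
  · exact Units.ext hEv
  · refine ⟨fun i j => MvPolynomial.coeff (Finsupp.single j 1)
      (homogeneousComponent 1 (f.val i)), ?_⟩
    rw [hspec]
    funext i
    show homogeneousComponent 1 (f.val i) = ∑ j, C _ * X j
    exact homog_one_eq _ (homogeneousComponent_isHomogeneous 1 _)
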